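/- Let (aₙ)ₙ≥₁ be real with ∑ aₙEⁿ of positive radius of convergence and a₁ > 0, bₙ = (n√(2π)Γ(n))/(4Γ(n+1/2))·aₙ, and W(E) = ∑ₙ≥₁ bₙ E^{(2n−1)/2} for E > 0 small. Then 2√2 ∫₀ᴱ W'(s)/√(E−s) ds = π·∑ₙ≥₁ n·aₙ·E^{n−1} for all small E > 0. -/

import Mathlib

open Real Filter Set MeasureTheory

lemma beta_scaled {u v E : ℝ} (hu : 0 < u) (hv : 0 < v) (hE : 0 < E) :
    ∫ s in (0:ℝ)..E, s ^ (u - 1) * (E - s) ^ (v - 1) =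
      E ^ (u + v - 1) * (Real.Gamma u * Real.Gamma v / Real.Gamma (u + v)) := by
  have hre_u : 0 < Complex.re u := by simpa using hu
  have hre_v : 0 < Complex.re v := by simpa using hv
  have hβ := Complex.Gamma_mul_Gamma_eq_betaIntegral hre_u hre_v
  have hΓ : Complex.Gamma ((u:ℂ) + (v:ℂ)) ≠ 0 := by
    rw [show ((u:ℂ) + v) = ((u + v : ℝ) : ℂ) by push_cast; ring, Complex.Gamma_ofReal]
    exact_mod_cast (Real.Gamma_pos_of_pos (by positivity)).ne'
  have hbeta : Complex.betaIntegral u v =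
      Complex.Gamma u * Complex.Gamma v / Complex.Gamma ((u:ℂ) + v) := by
    rw [eq_div_iff hΓ, hβ]; ring
  have h1 := Complex.betaIntegral_scaled (u:ℂ) (v:ℂ) hE
  rw [hbeta] at h1
  have key : EqOn (fun x : ℝ => (x:ℂ) ^ ((u:ℂ) - 1) * ((E:ℂ) - (x:ℂ)) ^ ((v:ℂ) - 1))
      (fun x : ℝ => ((x ^ (u - 1) * (E - x) ^ (v - 1) : ℝ) : ℂ)) (Set.uIcc (0:ℝ) E) := by
    intro x hx
    rw [Set.uIcc_of_le hE.le] at hx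
    simp only
    rw [Complex.ofReal_mul, Complex.ofReal_cpow hx.1,
      Complex.ofReal_cpow (by linarith [hx.2] : (0:ℝ) ≤ E - x)]
    push_cast
    ring
  rw [intervalIntegral.integral_congr key, intervalIntegral.integral_ofReal] at h1
  have h2 : ((E:ℂ)) ^ ((u:ℂ) + v - 1) = ((E ^ (u + v - 1) : ℝ) : ℂ) := by
    rw [Complex.ofReal_cpow hE.le]
    push_cast
    ring_nf
  rw [h2, show ((u:ℂ) + v) = ((u + v : ℝ) : ℂ) by push_cast; ring, Complex.Gamma_ofReal,
    Complex.Gamma_ofReal, Complex.Gamma_ofReal] at h1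
  exact_mod_cast h1

lemma beta_nat' (n : ℕ) {E : ℝ} (hE : 0 < E) :
    ∫ s in (0:ℝ)..E, s ^ ((n:ℝ) - 1/2) * (E - s) ^ (-(1/2) : ℝ) =
      E ^ n * (Real.Gamma ((n:ℝ) + 1/2) * Real.sqrt π / Real.Gamma ((n:ℝ) + 1)) := by
  have h := beta_scaled (u := (n:ℝ) + 1/2) (v := 1/2) (by positivity) (by norm_num) hE
  rw [show ((n:ℝ) + 1/2) - 1 = (n:ℝ) - 1/2 by ring, show ((1:ℝ)/2) - 1 = (-(1/2) : ℝ) by ring,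
    show ((n:ℝ) + 1/2) + 1/2 - 1 = (n:ℝ) by ring,
    show ((n:ℝ) + 1/2) + 1/2 = (n:ℝ) + 1 by ring, Real.rpow_natCast,
    show ((1:ℝ)/2) = ((1/2 : ℝ)) by norm_num, Real.Gamma_one_half_eq] at h
  exact h

lemma int_integrable' {p q : ℝ} (hp : -1 < p) (hq : -1 < q) {E : ℝ} (hE : 0 < E) :
    IntervalIntegrable (fun s => s ^ p * (E - s) ^ q) volume 0 E := by
  have h2E : 0 < E / 2 := by linarith
  have h1 : IntervalIntegrable (fun s => s ^ p * (E - s) ^ q) volume 0 (E / 2) := by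
    apply (intervalIntegral.intervalIntegrable_rpow' hp).mul_continuousOn
    apply ContinuousOn.rpow_const (continuous_const.sub continuous_id).continuousOn
    intro x hx
    rw [Set.uIcc_of_le h2E.le] at hx
    exact Or.inl (by intro h; simp only [Pi.sub_apply, id] at h; nlinarith [hx.2])
  have h2 : IntervalIntegrable (fun s => s ^ p * (E - s) ^ q) volume (E / 2) E := by
    have base : IntervalIntegrable (fun s => (E - s) ^ q) volume (E / 2) E := by
      have := (intervalIntegral.intervalIntegrable_rpow' hq (a := 0) (b := E / 2)).comp_sub_left E
      simpa [sub_half] using this.symm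
    have cont : ContinuousOn (fun s : ℝ => s ^ p) (Set.uIcc (E / 2) E) := by
      apply ContinuousOn.rpow_const continuousOn_id
      intro x hx
      rw [Set.uIcc_of_le (by linarith : E / 2 ≤ E)] at hx
      exact Or.inl (by intro h; simp only [id_eq] at h; rw [h] at hx; exact absurd hx.1 (by linarith))
    have := base.mul_continuousOn cont
    have heq : (fun s : ℝ => s ^ p * (E - s) ^ q) = fun s => (E - s) ^ q * s ^ p := by
      funext s; ring
    rw [heq]
    exact this
  exact h1.trans h2

lemma summable_aux' {c : ℕ → ℝ} {r r' : ℝ} (h0 : 0 ≤ r) (hrr' : r < r')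
    (hs : Summable fun n => c n * r' ^ n) :
    Summable fun n : ℕ => ((n:ℝ) + 1) * |c n| * r ^ n := by
  have hr' : 0 < r' := lt_of_le_of_lt h0 hrr'
  obtain ⟨C, hC⟩ := (hs.tendsto_atTop_zero.norm).bddAbove_range
  have hCn : ∀ n : ℕ, |c n| * r' ^ n ≤ C := by
    intro n
    have := hC ⟨n, rfl⟩
    simpa [abs_mul, abs_of_pos hr'] using this
  have hx : |r / r'| < 1 := by
    rw [abs_of_nonneg (div_nonneg h0 hr'.le), div_lt_one hr']; exact hrr'
  have hsum : Summable fun n : ℕ => C * (((n:ℝ) + 1) * (r / r') ^ n) := by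
    apply Summable.mul_left
    have h1 : Summable fun n : ℕ => (n:ℝ) * (r / r') ^ n := by
      simpa using summable_pow_mul_geometric_of_norm_lt_one 1 hx
    have h2 : Summable fun n : ℕ => (r / r') ^ n := summable_geometric_of_lt_one
      (by positivity) (by rwa [abs_of_nonneg (by positivity)] at hx)
    simpa [add_mul, one_mul] using h1.add h2
  apply hsum.of_nonneg_of_le
  · intro n; positivity
  · intro n
    have h1 : |c n| ≤ C / r' ^ n := by
      rw [le_div_iff₀ (pow_pos hr' n)]; exact hCn n
    have hrn : r ^ n ≥ 0 := pow_nonneg h0 n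
    calc ((n:ℝ) + 1) * |c n| * r ^ n ≤ ((n:ℝ) + 1) * (C / r' ^ n) * r ^ n := by
          apply mul_le_mul_of_nonneg_right _ hrn
          exact mul_le_mul_of_nonneg_left h1 (by positivity)
      _ = C * (((n:ℝ) + 1) * (r / r') ^ n) := by
          rw [div_pow]; field_simp
lemma hsum_pow' {b : ℕ → ℝ} {W : ℝ → ℝ} {ρ : ℝ}
    (hW : ∀ E : ℝ, 0 < E → E < ρ → HasSum (fun n : ℕ => b (n + 1) * E ^ ((n:ℝ) + 1/2)) (W E))
    {x : ℝ} (h1 : 0 < x) (h2 : x < ρ) :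
    Summable fun n : ℕ => (b (n + 1) * x ^ ((1:ℝ)/2)) * x ^ n := by
  refine ((hW x h1 h2).summable).congr fun n => ?_
  rw [Real.rpow_add h1, Real.rpow_natCast]
  ring

lemma deriv_lemma' {b : ℕ → ℝ} {ρ : ℝ} {W : ℝ → ℝ}
    (hW : ∀ E : ℝ, 0 < E → E < ρ → HasSum (fun n : ℕ => b (n + 1) * E ^ ((n:ℝ) + 1/2)) (W E))
    {s₀ : ℝ} (hs₀ : 0 < s₀) (hs₀ρ : s₀ < ρ) :
    HasDerivAt W (∑' n : ℕ, (((n:ℝ) + 1/2) * b (n + 1)) * s₀ ^ ((n:ℝ) - 1/2)) s₀ := by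
  set r : ℝ := (s₀ + ρ) / 2 with hr
  have hr1 : s₀ < r := by rw [hr]; linarith
  have hr2 : r < ρ := by rw [hr]; linarith
  have hr0 : 0 < r := lt_trans hs₀ hr1
  set r'' : ℝ := (r + ρ) / 2 with hr''
  have hrr'' : r < r'' := by rw [hr'']; linarith
  have hr''ρ : r'' < ρ := by rw [hr'']; linarith
  have hr''0 : 0 < r'' := lt_trans hr0 hrr''
  have hs2 : 0 < s₀ / 2 := by linarith
  have hsum'' := hsum_pow' hW hr''0 hr''ρ
  have haux := summable_aux' hr0.le hrr'' hsum''
  -- the uniform bound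
  set u : ℕ → ℝ := fun n => (((n:ℝ) + 1) * |b (n + 1) * r'' ^ ((1:ℝ)/2)| * r ^ n) *
      ((s₀ / 2) ^ (-(1/2) : ℝ) * (r'' ^ ((1:ℝ)/2))⁻¹) with hu
  have hu_sum : Summable u := haux.mul_right _
  have habs : ∀ n : ℕ, |b (n + 1) * r'' ^ ((1:ℝ)/2)| * (r'' ^ ((1:ℝ)/2))⁻¹ = |b (n + 1)| := by
    intro n
    rw [abs_mul, abs_of_pos (Real.rpow_pos_of_pos hr''0 _), mul_assoc,
      mul_inv_cancel₀ (Real.rpow_pos_of_pos hr''0 _).ne', mul_one]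
  have key := hasDerivAt_tsum_of_isPreconnected (F := ℝ)
    (g := fun (n : ℕ) (x : ℝ) => b (n + 1) * x ^ ((n:ℝ) + 1/2))
    (g' := fun (n : ℕ) (x : ℝ) => b (n + 1) * (((n:ℝ) + 1/2) * x ^ ((n:ℝ) - 1/2)))
    hu_sum (isOpen_Ioo (a := s₀ / 2) (b := r)) (isPreconnected_Ioo)
    (fun n y hy => by
      have hy0 : y ≠ 0 := by have := hy.1; intro h; rw [h] at this; linarith
      have := (Real.hasDerivAt_rpow_const (x := y) (p := (n:ℝ) + 1/2) (Or.inl hy0)).const_mul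
        (b (n + 1))
      rw [show (n:ℝ) + 1/2 - 1 = (n:ℝ) - 1/2 by ring] at this
      exact this)
    (fun n y hy => by
      have hy1 : s₀ / 2 < y := hy.1
      have hy2 : y < r := hy.2
      have hy0 : 0 < y := lt_trans hs2 hy1
      rw [Real.norm_eq_abs, abs_mul, abs_mul]
      have e1 : |y ^ ((n:ℝ) - 1/2)| = y ^ (n:ℝ) * y ^ (-(1/2) : ℝ) := by
        rw [abs_of_pos (Real.rpow_pos_of_pos hy0 _), show (n:ℝ) - 1/2 = (n:ℝ) + (-(1/2)) by ring,
          Real.rpow_add hy0]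
      rw [e1, abs_of_nonneg (by positivity : (0:ℝ) ≤ (n:ℝ) + 1/2)]
      have b1 : y ^ (n:ℝ) ≤ r ^ n := by
        rw [Real.rpow_natCast]
        exact pow_le_pow_left₀ hy0.le hy2.le n
      have b2 : y ^ (-(1/2) : ℝ) ≤ (s₀ / 2) ^ (-(1/2) : ℝ) :=
        Real.rpow_le_rpow_of_nonpos hs2 hy1.le (by norm_num)
      have b3 : ((n:ℝ) + 1/2) ≤ (n:ℝ) + 1 := by linarith
      rw [hu]
      simp only
      rw [mul_comm (((n:ℝ) + 1) * |b (n + 1) * r'' ^ ((1:ℝ)/2)| * r ^ n) _, mul_comm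
        ((s₀ / 2) ^ (-(1/2) : ℝ)) _]
      calc |b (n + 1)| * (((n:ℝ) + 1/2) * (y ^ (n:ℝ) * y ^ (-(1/2) : ℝ)))
          ≤ |b (n + 1)| * (((n:ℝ) + 1) * (r ^ n * (s₀ / 2) ^ (-(1/2) : ℝ))) := by
            apply mul_le_mul_of_nonneg_left _ (abs_nonneg _)
            apply mul_le_mul b3 (mul_le_mul b1 b2 (Real.rpow_pos_of_pos hy0 _).le
              (by positivity)) (by positivity) (by positivity)
        _ = (r'' ^ ((1:ℝ)/2))⁻¹ * (s₀ / 2) ^ (-(1/2) : ℝ) *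
              (((n:ℝ) + 1) * (|b (n + 1) * r'' ^ ((1:ℝ)/2)|) * r ^ n) := by
            rw [mul_comm ((r'' ^ ((1:ℝ)/2))⁻¹) _]
            rw [show (s₀ / 2) ^ (-(1/2) : ℝ) * (r'' ^ ((1:ℝ)/2))⁻¹ *
              (((n:ℝ) + 1) * |b (n + 1) * r'' ^ ((1:ℝ)/2)| * r ^ n) =
              (((n:ℝ) + 1) * (|b (n + 1) * r'' ^ ((1:ℝ)/2)| * (r'' ^ ((1:ℝ)/2))⁻¹) * r ^ n) *
                (s₀ / 2) ^ (-(1/2) : ℝ) by ring, habs n]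
            ring)
    (show s₀ ∈ Ioo (s₀ / 2) r from ⟨by linarith, hr1⟩)
    ((hW s₀ hs₀ hs₀ρ).summable)
    (show s₀ ∈ Ioo (s₀ / 2) r from ⟨by linarith, hr1⟩)
  have hWeq : W =ᶠ[nhds s₀] fun z => ∑' n : ℕ, b (n + 1) * z ^ ((n:ℝ) + 1/2) := by
    filter_upwards [isOpen_Ioo.eventually_mem (show s₀ ∈ Ioo (0:ℝ) ρ from ⟨hs₀, hs₀ρ⟩)] with x hx
    exact ((hW x hx.1 hx.2).tsum_eq).symm
  have final := key.congr_of_eventuallyEq hWeq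
  exact final.congr_deriv (tsum_congr fun n => by ring)

lemma K_le' (n : ℕ) :
    Real.Gamma ((n:ℝ) + 1/2) * Real.sqrt π / Real.Gamma ((n:ℝ) + 1) ≤ π := by
  induction n with
  | zero =>
    simp only [Nat.cast_zero, zero_add]
    rw [show ((1:ℝ)/2) = ((1/2 : ℝ)) by norm_num, Real.Gamma_one_half_eq]
    rw [Real.Gamma_one, div_one, Real.mul_self_sqrt Real.pi_pos.le]
  | succ n ih =>
    push_cast
    have h1 : 0 < Real.Gamma ((n:ℝ) + 1/2) := Real.Gamma_pos_of_pos (by positivity)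
    have h2 : 0 < Real.Gamma ((n:ℝ) + 1) := Real.Gamma_pos_of_pos (by positivity)
    have g1 : Real.Gamma ((n:ℝ) + 1 + 1/2) = ((n:ℝ) + 1/2) * Real.Gamma ((n:ℝ) + 1/2) := by
      rw [show (n:ℝ) + 1 + 1/2 = ((n:ℝ) + 1/2) + 1 by ring, Real.Gamma_add_one (by positivity)]
    have g2 : Real.Gamma ((n:ℝ) + 1 + 1) = ((n:ℝ) + 1) * Real.Gamma ((n:ℝ) + 1) := by
      rw [show (n:ℝ) + 1 + 1 = ((n:ℝ) + 1) + 1 by ring, Real.Gamma_add_one (by positivity)]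
    rw [g1, g2]
    calc ((n:ℝ) + 1/2) * Real.Gamma ((n:ℝ) + 1/2) * Real.sqrt π /
          (((n:ℝ) + 1) * Real.Gamma ((n:ℝ) + 1))
        = (((n:ℝ) + 1/2) / ((n:ℝ) + 1)) *
          (Real.Gamma ((n:ℝ) + 1/2) * Real.sqrt π / Real.Gamma ((n:ℝ) + 1)) := by
          rw [div_mul_div_comm]; ring_nf
      _ ≤ 1 * (Real.Gamma ((n:ℝ) + 1/2) * Real.sqrt π / Real.Gamma ((n:ℝ) + 1)) := by
          apply mul_le_mul_of_nonneg_right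
          · rw [div_le_one (by positivity)]; linarith
          · positivity
      _ = Real.Gamma ((n:ℝ) + 1/2) * Real.sqrt π / Real.Gamma ((n:ℝ) + 1) := one_mul _
      _ ≤ π := ih

lemma term_eq' (n : ℕ) (A E : ℝ) :
    2 * Real.sqrt 2 * ((((n:ℝ) + 1/2) * ((((n:ℝ) + 1) * Real.sqrt (2*π) *
        Real.Gamma ((n:ℝ) + 1)) / (4 * Real.Gamma ((n:ℝ) + 1 + 1/2)) * A)) *
      (E ^ n * (Real.Gamma ((n:ℝ) + 1/2) * Real.sqrt π / Real.Gamma ((n:ℝ) + 1)))) =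
    π * (((n:ℝ) + 1) * A * E ^ n) := by
  have hΓ1 : 0 < Real.Gamma ((n:ℝ) + 1/2) := Real.Gamma_pos_of_pos (by positivity)
  have hΓ2 : 0 < Real.Gamma ((n:ℝ) + 1) := Real.Gamma_pos_of_pos (by positivity)
  have hrec : Real.Gamma ((n:ℝ) + 1 + 1/2) = ((n:ℝ) + 1/2) * Real.Gamma ((n:ℝ) + 1/2) := by
    rw [show (n:ℝ) + 1 + 1/2 = ((n:ℝ) + 1/2) + 1 by ring, Real.Gamma_add_one (by positivity)]
  have h2pi : Real.sqrt (2*π) = Real.sqrt 2 * Real.sqrt π := Real.sqrt_mul (by norm_num) π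
  have hn : (0:ℝ) < (n:ℝ) + 1/2 := by positivity
  rw [hrec, h2pi]
  field_simp
  ring_nf
  rw [Real.sq_sqrt (by norm_num : (0:ℝ) ≤ 2), Real.sq_sqrt Real.pi_pos.le]
  ring
theorem stmt_9 (a b : ℕ → ℝ) (W : ℝ → ℝ) (ρ : ℝ) (hρ : 0 < ρ)
    (ha : ∀ E : ℝ, |E| < ρ → Summable (fun n : ℕ => a (n + 1) * E ^ (n + 1)))
    (ha1 : 0 < a 1)
    (hb : ∀ n : ℕ, 1 ≤ n →
      b n = (n * Real.sqrt (2 * π) * Real.Gamma n) / (4 * Real.Gamma (n + 1/2)) * a n)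
    (hW : ∀ E : ℝ, 0 < E → E < ρ →
      HasSum (fun n : ℕ => b (n + 1) * E ^ (((2 * ((n:ℝ) + 1) - 1) / 2) : ℝ)) (W E)) :
    ∃ ε > (0:ℝ), ∀ E : ℝ, 0 < E → E < ε →
      2 * Real.sqrt 2 * ∫ s in (0:ℝ)..E, deriv W s / Real.sqrt (E - s) =
        π * ∑' n : ℕ, ((n:ℝ) + 1) * a (n + 1) * E ^ n := by
  refine ⟨ρ, hρ, fun E hE0 hEρ => ?_⟩
  have hW' : ∀ x : ℝ, 0 < x → x < ρ →
      HasSum (fun n : ℕ => b (n + 1) * x ^ ((n:ℝ) + 1/2)) (W x) := by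
    intro x h1 h2
    have e : ∀ n : ℕ, ((2 * ((n:ℝ) + 1) - 1) / 2) = (n:ℝ) + 1/2 := fun n => by ring
    have h := hW x h1 h2
    simp_rw [e] at h
    exact h
  -- notation
  set c : ℕ → ℝ := fun n => ((n:ℝ) + 1/2) * b (n + 1) with hc
  set K : ℕ → ℝ := fun n =>
    Real.Gamma ((n:ℝ) + 1/2) * Real.sqrt π / Real.Gamma ((n:ℝ) + 1) with hK
  set F : ℕ → ℝ → ℝ := fun n s => c n * (s ^ ((n:ℝ) - 1/2) * (E - s) ^ (-(1/2) : ℝ)) with hF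
  -- geometry
  set r' : ℝ := (E + ρ) / 2 with hr'
  have hEr' : E < r' := by rw [hr']; linarith
  have hr'ρ : r' < ρ := by rw [hr']; linarith
  have hr'0 : 0 < r' := lt_trans hE0 hEr'
  have haux := summable_aux' hE0.le hEr' (hsum_pow' hW' hr'0 hr'ρ)
  -- integrand rewriting
  have hcong : ∀ s ∈ Ioo (0:ℝ) E, deriv W s / Real.sqrt (E - s) = ∑' n : ℕ, F n s := by
    intro s hs
    have hEs : 0 < E - s := by linarith [hs.2]
    have hd : deriv W s = ∑' n : ℕ, c n * s ^ ((n:ℝ) - 1/2) :=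
      (deriv_lemma' hW' hs.1 (lt_trans hs.2 hEρ)).deriv
    rw [hd, div_eq_mul_inv, Real.sqrt_eq_rpow, ← Real.rpow_neg hEs.le, ← tsum_mul_right]
    exact tsum_congr fun n => mul_assoc _ _ _
  -- integrability of each term
  have hInt : ∀ n : ℕ, IntegrableOn (F n) (Ioo 0 E) volume := by
    intro n
    have hp : (-1:ℝ) < (n:ℝ) - 1/2 := by
      have := Nat.cast_nonneg (α := ℝ) n; linarith
    have hbase := int_integrable' hp (by norm_num : (-1:ℝ) < -(1/2)) hE0
    have h1 := ((intervalIntegrable_iff_integrableOn_Ioc_of_le hE0.le).mp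
      hbase).mono_set Set.Ioo_subset_Ioc_self
    exact h1.const_mul (c n)
  -- value of each integral
  have hval : ∀ n : ℕ, ∫ s in Ioo (0:ℝ) E, F n s = c n * (E ^ n * K n) := by
    intro n
    rw [hF]
    simp only
    rw [← MeasureTheory.integral_Ioc_eq_integral_Ioo, ← intervalIntegral.integral_of_le hE0.le,
      intervalIntegral.integral_const_mul, beta_nat' n hE0]
  -- value of each norm integral
  have hnormval : ∀ n : ℕ, ∫ s in Ioo (0:ℝ) E, ‖F n s‖ = |c n| * (E ^ n * K n) := by
    intro n
    have heq : EqOn (fun s => ‖F n s‖)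
        (fun s => |c n| * (s ^ ((n:ℝ) - 1/2) * (E - s) ^ (-(1/2) : ℝ))) (Ioo 0 E) := by
      intro s hs
      simp only [hF, Real.norm_eq_abs, abs_mul]
      rw [abs_of_nonneg (Real.rpow_nonneg hs.1.le _),
        abs_of_nonneg (Real.rpow_nonneg (by linarith [hs.2] : (0:ℝ) ≤ E - s) _)]
    rw [MeasureTheory.setIntegral_congr_fun measurableSet_Ioo heq,
      ← MeasureTheory.integral_Ioc_eq_integral_Ioo, ← intervalIntegral.integral_of_le hE0.le,
      intervalIntegral.integral_const_mul, beta_nat' n hE0]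
  -- summability of norm integrals
  have habs : ∀ n : ℕ, |b (n + 1) * r' ^ ((1:ℝ)/2)| * (r' ^ ((1:ℝ)/2))⁻¹ = |b (n + 1)| := by
    intro n
    rw [abs_mul, abs_of_pos (Real.rpow_pos_of_pos hr'0 _), mul_assoc,
      mul_inv_cancel₀ (Real.rpow_pos_of_pos hr'0 _).ne', mul_one]
  have hKpos : ∀ n : ℕ, 0 ≤ K n := by
    intro n
    rw [hK]
    have h1 : 0 < Real.Gamma ((n:ℝ) + 1/2) := Real.Gamma_pos_of_pos (by positivity)
    have h2 : 0 < Real.Gamma ((n:ℝ) + 1) := Real.Gamma_pos_of_pos (by positivity)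
    positivity
  have hnormsum : Summable fun n : ℕ => ∫ s in Ioo (0:ℝ) E, ‖F n s‖ := by
    rw [show (fun n : ℕ => ∫ s in Ioo (0:ℝ) E, ‖F n s‖)
        = fun n => |c n| * (E ^ n * K n) from funext hnormval]
    refine Summable.of_nonneg_of_le ?_ ?_
      (haux.mul_right (π * (r' ^ ((1:ℝ)/2))⁻¹))
    · intro n
      have := hKpos n
      positivity
    · intro n
      have hcn : |c n| = ((n:ℝ) + 1/2) * |b (n + 1)| := by
        rw [hc]; simp only
        rw [abs_mul, abs_of_pos (by positivity : (0:ℝ) < (n:ℝ) + 1/2)]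
      have hEn : (0:ℝ) ≤ E ^ n := pow_nonneg hE0.le n
      have step1 : |c n| * (E ^ n * K n) ≤ (((n:ℝ) + 1) * |b (n + 1)|) * (E ^ n * π) := by
        rw [hcn]
        have l1 : ((n:ℝ) + 1/2) * |b (n + 1)| ≤ ((n:ℝ) + 1) * |b (n + 1)| :=
          mul_le_mul_of_nonneg_right (by linarith) (abs_nonneg _)
        have l2 : E ^ n * K n ≤ E ^ n * π :=
          mul_le_mul_of_nonneg_left (hK ▸ K_le' n) hEn
        exact mul_le_mul l1 l2 (by positivity) (by positivity)
      calc |c n| * (E ^ n * K n) ≤ (((n:ℝ) + 1) * |b (n + 1)|) * (E ^ n * π) := step1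
        _ = (((n:ℝ) + 1) * |b (n + 1) * r' ^ ((1:ℝ)/2)| * E ^ n) *
            (π * (r' ^ ((1:ℝ)/2))⁻¹) := by
          rw [show (((n:ℝ) + 1) * |b (n + 1) * r' ^ ((1:ℝ)/2)| * E ^ n) *
              (π * (r' ^ ((1:ℝ)/2))⁻¹) =
            (((n:ℝ) + 1) * (|b (n + 1) * r' ^ ((1:ℝ)/2)| * (r' ^ ((1:ℝ)/2))⁻¹)) *
              (E ^ n * π) by ring, habs n]
  -- interchange of sum and integral
  have interchange :=
    (MeasureTheory.hasSum_integral_of_summable_integral_norm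
      (μ := volume.restrict (Ioo (0:ℝ) E)) (fun n => hInt n) hnormsum).tsum_eq
  rw [intervalIntegral.integral_of_le hE0.le, MeasureTheory.integral_Ioc_eq_integral_Ioo,
    MeasureTheory.setIntegral_congr_fun measurableSet_Ioo hcong, ← interchange,
    show (fun n : ℕ => ∫ s in Ioo (0:ℝ) E, F n s) = fun n => c n * (E ^ n * K n)
      from funext hval, ← tsum_mul_left, ← tsum_mul_left]
  refine tsum_congr fun n => ?_
  have hbn := hb (n + 1) (by omega)
  push_cast at hbn
  rw [hc, hK]
  simp only
  rw [hbn]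
  exact term_eq' n (a (n + 1)) E
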